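/- Let A be a real d×n matrix, b ∈ ℝ^d, P a real m×n matrix, M > 0, R ≥ 1/(2M), ν > 0, and let f : ℝ → ℝ be convex, three times differentiable with continuous third derivative, and M-quasi-self-concordant. Let F(y) = ∑_{i=1}^m f(y_i), let x* minimize F(Px) over {x : Ax = b} with ‖Px*‖_∞ ≤ R, and let x satisfy Ax = b, ‖Px‖_∞ ≤ R, and ν/2 < F(Px) − F(Px*) ≤ ν. Then the optimal value V = sup{ res_x(Δ) : AΔ = 0, ‖PΔ − z(x)‖_∞ ≤ 1/(2M) } satisfies ν/(8MR) < V ≤ e²·ν. -/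

import Mathlib

open scoped BigOperators
open Set
set_option maxHeartbeats 1000000

/-- The shift vector z(x) of the residual problem. -/
noncomputable def zShift (m n : ℕ) (P : Matrix (Fin m) (Fin n) ℝ)
    (M R : ℝ) (x : Fin n → ℝ) : Fin m → ℝ := fun i =>
  if (P.mulVec x) i - 1 / (2 * M) < -R then
    -(1 / (2 * M)) + R + (P.mulVec x) i
  else if R < (P.mulVec x) i + 1 / (2 * M) then
    -R + (P.mulVec x) i + 1 / (2 * M)
  else 0

/-- The residual objective res_x(Δ) (with the corrected constant (2e)⁻¹). -/
noncomputable def resObj (m n : ℕ) (P : Matrix (Fin m) (Fin n) ℝ)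
    (f : ℝ → ℝ) (x Δ : Fin n → ℝ) : ℝ :=
  (∑ i, deriv f ((P.mulVec x) i) * (P.mulVec Δ) i) -
    (2 * Real.exp 1)⁻¹ * ∑ i, deriv (deriv f) ((P.mulVec x) i) * (P.mulVec Δ) i ^ 2




lemma qsc_h2_nonneg {f : ℝ → ℝ} {M : ℝ} (hM : 0 < M)
    (hqsc : ∀ s : ℝ, |deriv (deriv (deriv f)) s| ≤ M * deriv (deriv f) s) (s : ℝ) :
    0 ≤ deriv (deriv f) s := by
  nlinarith [abs_nonneg (deriv (deriv (deriv f)) s), hqsc s]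

lemma contDiff_h2 {f : ℝ → ℝ} (hf : ContDiff ℝ 3 f) : ContDiff ℝ 1 (deriv (deriv f)) := by
  have h := ContDiff.iterate_deriv' 1 2 (f := f) (by exact_mod_cast hf)
  simpa [Function.iterate_succ, Function.comp] using h

lemma qsc_grow {f : ℝ → ℝ} {M : ℝ} (hM : 0 < M) (hf : ContDiff ℝ 3 f)
    (hqsc : ∀ s : ℝ, |deriv (deriv (deriv f)) s| ≤ M * deriv (deriv f) s)
    {a b : ℝ} (hab : |b - a| ≤ 1 / M) :
    deriv (deriv f) b ≤ Real.exp 1 * deriv (deriv f) a := by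
  set h2 := deriv (deriv f) with hh2
  have hd2 : Differentiable ℝ h2 := (contDiff_h2 hf).differentiable one_ne_zero
  have key : ∀ u v : ℝ, u ≤ v → Real.exp (-(M*v)) * h2 v ≤ Real.exp (-(M*u)) * h2 u := by
    have hdiff : Differentiable ℝ (fun t => Real.exp (-(M*t)) * h2 t) := by
      exact (((differentiable_const M).mul differentiable_id).neg.exp).mul hd2
    have hder : ∀ t : ℝ, deriv (fun t => Real.exp (-(M*t)) * h2 t) t ≤ 0 := by
      intro t
      have h1 : HasDerivAt (fun t : ℝ => -(M*t)) (-M) t := by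
        simpa [neg_mul] using ((hasDerivAt_id t).const_mul (-M))
      have hexp : HasDerivAt (fun t : ℝ => Real.exp (-(M*t))) (Real.exp (-(M*t)) * (-M)) t :=
        h1.exp
      have h2d : HasDerivAt h2 (deriv h2 t) t := (hd2 t).hasDerivAt
      have hprod := hexp.mul h2d
      rw [HasDerivAt.deriv (f := fun t => Real.exp (-(M*t)) * h2 t) hprod]
      have habs := hqsc t
      have h3le : deriv h2 t ≤ M * h2 t := le_trans (le_abs_self _) (by simpa [hh2] using habs)
      have hepos := Real.exp_pos (-(M*t))
      nlinarith
    intro u v huv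
    exact antitone_of_deriv_nonpos hdiff hder huv
  have key2 : ∀ u v : ℝ, u ≤ v → Real.exp (M*u) * h2 u ≤ Real.exp (M*v) * h2 v := by
    have hdiff : Differentiable ℝ (fun t => Real.exp (M*t) * h2 t) := by
      exact (((differentiable_const M).mul differentiable_id).exp).mul hd2
    have hder : ∀ t : ℝ, 0 ≤ deriv (fun t => Real.exp (M*t) * h2 t) t := by
      intro t
      have h1 : HasDerivAt (fun t : ℝ => M*t) M t := by
        simpa using ((hasDerivAt_id t).const_mul M)
      have hexp : HasDerivAt (fun t : ℝ => Real.exp (M*t)) (Real.exp (M*t) * M) t := h1.exp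
      have h2d : HasDerivAt h2 (deriv h2 t) t := (hd2 t).hasDerivAt
      have hprod := hexp.mul h2d
      rw [HasDerivAt.deriv (f := fun t => Real.exp (M*t) * h2 t) hprod]
      have habs := hqsc t
      have h3le : -(M * h2 t) ≤ deriv h2 t := by
        have := neg_abs_le (deriv (deriv (deriv f)) t)
        have h' : |deriv h2 t| ≤ M * h2 t := by simpa [hh2] using habs
        nlinarith [neg_abs_le (deriv h2 t), h']
      have hepos := Real.exp_pos (M*t)
      nlinarith
    intro u v huv
    exact monotone_of_deriv_nonneg hdiff hder huv
  have hnn := qsc_h2_nonneg hM hqsc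
  rcases le_total a b with hab' | hab'
  · have := key a b hab'
    have hE : h2 b ≤ Real.exp (M*(b-a)) * h2 a := by
      have hepos := Real.exp_pos (-(M*b))
      have := mul_le_mul_of_nonneg_left this (le_of_lt (Real.exp_pos (M*b)))
      calc h2 b = Real.exp (M*b) * (Real.exp (-(M*b)) * h2 b) := by
                  rw [← mul_assoc, ← Real.exp_add]; simp
        _ ≤ Real.exp (M*b) * (Real.exp (-(M*a)) * h2 a) := by
                  exact mul_le_mul_of_nonneg_left (key a b hab') (le_of_lt (Real.exp_pos _))
        _ = Real.exp (M*(b-a)) * h2 a := by rw [← mul_assoc, ← Real.exp_add]; ring_nf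
    refine hE.trans ?_
    have h1 : Real.exp (M*(b-a)) ≤ Real.exp 1 := by
      apply Real.exp_le_exp.mpr
      have : b - a ≤ 1/M := le_trans (le_abs_self _) hab
      calc M * (b-a) ≤ M * (1/M) := mul_le_mul_of_nonneg_left this hM.le
        _ = 1 := by field_simp
    exact mul_le_mul_of_nonneg_right h1 (hnn a)
  · have hE : h2 b ≤ Real.exp (M*(a-b)) * h2 a := by
      calc h2 b = Real.exp (-(M*b)) * (Real.exp (M*b) * h2 b) := by
                  rw [← mul_assoc, ← Real.exp_add]; simp
        _ ≤ Real.exp (-(M*b)) * (Real.exp (M*a) * h2 a) := by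
                  exact mul_le_mul_of_nonneg_left (key2 b a hab') (le_of_lt (Real.exp_pos _))
        _ = Real.exp (M*(a-b)) * h2 a := by rw [← mul_assoc, ← Real.exp_add]; ring_nf
    refine hE.trans ?_
    have h1 : Real.exp (M*(a-b)) ≤ Real.exp 1 := by
      apply Real.exp_le_exp.mpr
      have : a - b ≤ 1/M := by
        have := le_trans (neg_le_abs _) hab
        linarith [abs_sub_comm b a ▸ (le_abs_self (a-b)), (abs_sub_comm b a ▸ hab : |a-b| ≤ 1/M), le_abs_self (a-b)]
      calc M * (a-b) ≤ M * (1/M) := mul_le_mul_of_nonneg_left this hM.le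
        _ = 1 := by field_simp
    exact mul_le_mul_of_nonneg_right h1 (hnn a)



lemma iterDW2 {f : ℝ → ℝ} (hf : ContDiff ℝ 3 f) {a b : ℝ} (hab : a < b) {ξ : ℝ}
    (hξ : ξ ∈ Set.Icc a b) :
    iteratedDerivWithin 2 f (Set.Icc a b) ξ = deriv (deriv f) ξ := by
  have hu : UniqueDiffOn ℝ (Set.Icc a b) := uniqueDiffOn_Icc hab
  have hdf : Differentiable ℝ f := hf.differentiable (by norm_num)
  have hdf2 : Differentiable ℝ (deriv f) := by
    have : ContDiff ℝ 2 (deriv f) := by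
      have h := ContDiff.iterate_deriv' 2 1 (f := f) (by exact_mod_cast hf)
      simpa using h
    exact this.differentiable (by norm_num)
  have h1 : Set.EqOn (iteratedDerivWithin 1 f (Set.Icc a b)) (deriv f) (Set.Icc a b) := by
    intro y hy
    rw [iteratedDerivWithin_one]
    exact (hdf y).derivWithin (hu y hy)
  rw [show (2:ℕ) = 1 + 1 from rfl, iteratedDerivWithin_succ]
  rw [derivWithin_congr h1 (h1 hξ)]
  exact (hdf2 ξ).derivWithin (hu ξ hξ)

lemma taylor2_pos {f : ℝ → ℝ} (hf : ContDiff ℝ 3 f) (s v : ℝ) (hv : 0 < v) :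
    ∃ ξ ∈ Set.Ioo s (s+v), f (s+v) = f s + deriv f s * v + deriv (deriv f) ξ * v^2 / 2 := by
  have hx : s < s + v := by linarith
  have hu : UniqueDiffOn ℝ (Set.Icc s (s+v)) := uniqueDiffOn_Icc hx
  have hdf : Differentiable ℝ f := hf.differentiable (by norm_num)
  have hdf2 : Differentiable ℝ (deriv f) := by
    have : ContDiff ℝ 2 (deriv f) := by
      have h := ContDiff.iterate_deriv' 2 1 (f := f) (by exact_mod_cast hf)
      simpa using h
    exact this.differentiable (by norm_num)
  have h1 : Set.EqOn (iteratedDerivWithin 1 f (Set.Icc s (s+v))) (deriv f) (Set.Icc s (s+v)) := by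
    intro y hy
    rw [iteratedDerivWithin_one]
    exact (hdf y).derivWithin (hu y hy)
  have hcd : ContDiffOn ℝ 1 f (Set.Icc s (s+v)) := (hf.of_le (by norm_num)).contDiffOn
  have hdiff : DifferentiableOn ℝ (iteratedDerivWithin 1 f (Set.Icc s (s+v)))
      (Set.Ioo s (s+v)) := by
    exact (hdf2.differentiableOn).congr (fun y hy => h1 (Set.Ioo_subset_Icc_self hy))
  have huI : Set.uIcc s (s+v) = Set.Icc s (s+v) := Set.uIcc_of_le hx.le
  have huO : Set.uIoo s (s+v) = Set.Ioo s (s+v) := Set.uIoo_of_le hx.le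
  obtain ⟨ξ, hξ, heq⟩ := taylor_mean_remainder_lagrange (n := 1) hx.ne
    (by rw [huI]; exact_mod_cast hcd) (by rw [huI, huO]; exact hdiff)
  rw [huO] at hξ
  rw [huI] at heq
  refine ⟨ξ, hξ, ?_⟩
  rw [iterDW2 hf hx (Set.Ioo_subset_Icc_self hξ)] at heq
  have htay : taylorWithinEval f 1 (Set.Icc s (s+v)) s (s+v) = f s + deriv f s * v := by
    rw [show (1:ℕ) = 0 + 1 from rfl, taylorWithinEval_succ, taylor_within_zero_eval]
    have h1s : iteratedDerivWithin (0+1) f (Set.Icc s (s+v)) s = deriv f s :=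
      h1 (Set.left_mem_Icc.mpr hx.le)
    rw [h1s]
    simp
    ring
  rw [htay] at heq
  have : (s + v - s) = v := by ring
  rw [this] at heq
  norm_num at heq
  linarith [heq]

lemma taylor2 {f : ℝ → ℝ} (hf : ContDiff ℝ 3 f) (s v : ℝ) :
    ∃ ξ : ℝ, |ξ - s| ≤ |v| ∧
      f (s+v) = f s + deriv f s * v + deriv (deriv f) ξ * v^2 / 2 := by
  rcases lt_trichotomy v 0 with hv | hv | hv
  · -- reflection
    set g : ℝ → ℝ := fun t => f (2*s - t) with hg
    have hgc : ContDiff ℝ 3 g := hf.comp (contDiff_const.sub contDiff_id)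
    obtain ⟨ξ, hξ, heq⟩ := taylor2_pos hgc s (-v) (by linarith)
    have hgd1 : deriv g = fun t => -deriv f (2*s - t) := by
      funext t; exact deriv_comp_const_sub f (2*s) t
    have hgd2 : deriv (deriv g) ξ = deriv (deriv f) (2*s - ξ) := by
      rw [hgd1]
      have : deriv (fun t => -deriv f (2*s - t)) ξ
          = -deriv (fun t => deriv f (2*s - t)) ξ := by
        simp [deriv.neg]
      rw [this, deriv_comp_const_sub]
      ring
    refine ⟨2*s - ξ, ?_, ?_⟩
    · rw [abs_sub_comm]
      have : s - (2*s - ξ) = ξ - s := by ring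
      rw [this, abs_of_pos (by linarith [hξ.1]), abs_of_neg hv]
      linarith [hξ.2]
    · have hgsv : g (s + -v) = f (s + v) := by simp [hg]; ring_nf
      have hgs : g s = f s := by simp [hg]; ring_nf
      have hgds : deriv g s = -deriv f s := by rw [hgd1]; simp; ring_nf
      rw [hgsv, hgs, hgds, hgd2] at heq
      rw [heq]; ring
  · exact ⟨s, by simp [hv]⟩
  · obtain ⟨ξ, hξ, heq⟩ := taylor2_pos hf s v hv
    exact ⟨ξ, by rw [abs_of_pos (by linarith [hξ.1]), abs_of_pos hv]; linarith [hξ.2], heq⟩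


lemma quad_bounds {f : ℝ → ℝ} {M : ℝ} (hM : 0 < M) (hf : ContDiff ℝ 3 f)
    (hqsc : ∀ s : ℝ, |deriv (deriv (deriv f)) s| ≤ M * deriv (deriv f) s)
    (s v : ℝ) (hv : |v| ≤ 1 / M) :
    f s + deriv f s * v + (Real.exp 1)⁻¹ * (deriv (deriv f) s * v^2) / 2 ≤ f (s+v) ∧
    f (s+v) ≤ f s + deriv f s * v + Real.exp 1 * (deriv (deriv f) s * v^2) / 2 := by
  obtain ⟨ξ, hξ, heq⟩ := taylor2 hf s v
  have hd : |ξ - s| ≤ 1/M := hξ.trans hv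
  have hub : deriv (deriv f) ξ ≤ Real.exp 1 * deriv (deriv f) s := qsc_grow hM hf hqsc hd
  have hlb : deriv (deriv f) s ≤ Real.exp 1 * deriv (deriv f) ξ := by
    have : |s - ξ| ≤ 1/M := by rwa [abs_sub_comm]
    exact qsc_grow hM hf hqsc this
  have hv2 : (0:ℝ) ≤ v^2 := sq_nonneg v
  have he : (0:ℝ) < Real.exp 1 := Real.exp_pos 1
  constructor
  · rw [heq]
    have h1 : (Real.exp 1)⁻¹ * (deriv (deriv f) s * v^2) ≤ deriv (deriv f) ξ * v^2 := by
      have h2 : (Real.exp 1)⁻¹ * deriv (deriv f) s ≤ deriv (deriv f) ξ := by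
        rw [inv_mul_le_iff₀ he]
        linarith [hlb]
      calc (Real.exp 1)⁻¹ * (deriv (deriv f) s * v^2)
          = ((Real.exp 1)⁻¹ * deriv (deriv f) s) * v^2 := by ring
        _ ≤ deriv (deriv f) ξ * v^2 := mul_le_mul_of_nonneg_right h2 hv2
    linarith
  · rw [heq]
    have h1 : deriv (deriv f) ξ * v^2 ≤ Real.exp 1 * (deriv (deriv f) s * v^2) := by
      calc deriv (deriv f) ξ * v^2 ≤ (Real.exp 1 * deriv (deriv f) s) * v^2 :=
            mul_le_mul_of_nonneg_right hub hv2
        _ = Real.exp 1 * (deriv (deriv f) s * v^2) := by ring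
    linarith


/-- Lemma 4.3: if ν/2 < F(Px) − F(Px*) ≤ ν, then the optimal residual
value V satisfies ν/(8MR) < V ≤ e²·ν. -/
theorem residual_value_range
    (d n m : ℕ) (A : Matrix (Fin d) (Fin n) ℝ) (b : Fin d → ℝ)
    (P : Matrix (Fin m) (Fin n) ℝ) (M R ν : ℝ)
    (hM : 0 < M) (hR : 1 / (2 * M) ≤ R) (hν : 0 < ν)
    (f : ℝ → ℝ) (hconv : ConvexOn ℝ Set.univ f) (hf : ContDiff ℝ 3 f)
    (hqsc : ∀ s : ℝ, |deriv (deriv (deriv f)) s| ≤ M * deriv (deriv f) s)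
    (xstar : Fin n → ℝ) (hxsA : A.mulVec xstar = b)
    (hxsR : ‖P.mulVec xstar‖ ≤ R)
    (hxsopt : ∀ x' : Fin n → ℝ, A.mulVec x' = b →
      (∑ i, f ((P.mulVec xstar) i)) ≤ ∑ i, f ((P.mulVec x') i))
    (x : Fin n → ℝ) (hxA : A.mulVec x = b) (hxR : ‖P.mulVec x‖ ≤ R)
    (hgap1 : ν / 2 < (∑ i, f ((P.mulVec x) i)) - ∑ i, f ((P.mulVec xstar) i))
    (hgap2 : (∑ i, f ((P.mulVec x) i)) - (∑ i, f ((P.mulVec xstar) i)) ≤ ν) :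
    ν / (8 * M * R) <
        sSup {v : ℝ | ∃ Δ : Fin n → ℝ, A.mulVec Δ = 0 ∧
          ‖P.mulVec Δ - zShift m n P M R x‖ ≤ 1 / (2 * M) ∧
          v = resObj m n P f x Δ} ∧
      sSup {v : ℝ | ∃ Δ : Fin n → ℝ, A.mulVec Δ = 0 ∧
          ‖P.mulVec Δ - zShift m n P M R x‖ ≤ 1 / (2 * M) ∧
          v = resObj m n P f x Δ} ≤ Real.exp 2 * ν := by
  classical
  set S : Set ℝ := {v : ℝ | ∃ Δ : Fin n → ℝ, A.mulVec Δ = 0 ∧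
          ‖P.mulVec Δ - zShift m n P M R x‖ ≤ 1 / (2 * M) ∧
          v = resObj m n P f x Δ} with hS
  have hc : (0:ℝ) < 1 / (2 * M) := by positivity
  have hR0 : (0:ℝ) < R := lt_of_lt_of_le hc hR
  have hcM : 1 / (2 * M) ≤ 1 / M := by
    rw [div_le_div_iff₀ (by linarith) hM]; linarith
  have hsb : ∀ i, |(P.mulVec x) i| ≤ R := fun i => by
    have := (pi_norm_le_iff_of_nonneg hR0.le).mp hxR i
    simpa [Real.norm_eq_abs] using this
  have hstb : ∀ i, |(P.mulVec xstar) i| ≤ R := fun i => by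
    have := (pi_norm_le_iff_of_nonneg hR0.le).mp hxsR i
    simpa [Real.norm_eq_abs] using this
  have hznorm : ∀ i, |zShift m n P M R x i| ≤ 1 / (2 * M) := by
    intro i
    have hs := abs_le.mp (hsb i)
    unfold zShift
    split_ifs with h1 h2 <;> rw [abs_le] <;> constructor <;> nlinarith [hs.1, hs.2, hc]
  -- Upper bound
  have hUB : ∀ v ∈ S, v ≤ Real.exp 2 * ν := by
    rintro v ⟨Δ, hAΔ, hfeas, rfl⟩
    have hui : ∀ i, |(P.mulVec Δ) i| ≤ 1 / M := by
      intro i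
      have h1 : |(P.mulVec Δ) i - zShift m n P M R x i| ≤ 1 / (2 * M) := by
        have := (pi_norm_le_iff_of_nonneg hc.le).mp hfeas i
        simpa [Real.norm_eq_abs] using this
      have h2 := hznorm i
      have h3 : |(P.mulVec Δ) i| ≤ |(P.mulVec Δ) i - zShift m n P M R x i|
          + |zShift m n P M R x i| := by
        calc |(P.mulVec Δ) i|
            = |((P.mulVec Δ) i - zShift m n P M R x i) + zShift m n P M R x i| := by ring_nf
          _ ≤ _ := abs_add_le _ _
      have hMid : 1 / (2 * M) + 1 / (2 * M) = 1 / M := by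
        rw [← add_div]
        rw [div_eq_div_iff (by linarith) (ne_of_gt hM)]
        ring
      linarith
    set lam : ℝ := (Real.exp 2)⁻¹ with hlam
    have hlam0 : 0 < lam := inv_pos.mpr (Real.exp_pos 2)
    have hlam1 : lam ≤ 1 := by
      rw [hlam]
      exact inv_le_one_of_one_le₀ (Real.one_le_exp (by norm_num))
    have hx' : A.mulVec (x - lam • Δ) = b := by
      rw [Matrix.mulVec_sub, Matrix.mulVec_smul, hAΔ, smul_zero, sub_zero, hxA]
    have hPx' : ∀ i, (P.mulVec (x - lam • Δ)) i = (P.mulVec x) i - lam * (P.mulVec Δ) i := by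
      intro i
      rw [Matrix.mulVec_sub, Matrix.mulVec_smul]
      simp
    have hkey : ∀ i, f ((P.mulVec x) i - lam * (P.mulVec Δ) i)
        ≤ f ((P.mulVec x) i) - deriv f ((P.mulVec x) i) * (lam * (P.mulVec Δ) i)
          + Real.exp 1 * (deriv (deriv f) ((P.mulVec x) i) * (lam * (P.mulVec Δ) i)^2) / 2 := by
      intro i
      have hvle : |-(lam * (P.mulVec Δ) i)| ≤ 1 / M := by
        rw [abs_neg, abs_mul, abs_of_pos hlam0]
        calc lam * |(P.mulVec Δ) i| ≤ 1 * |(P.mulVec Δ) i| :=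
              mul_le_mul_of_nonneg_right hlam1 (abs_nonneg _)
          _ = |(P.mulVec Δ) i| := one_mul _
          _ ≤ 1 / M := hui i
      have h := (quad_bounds hM hf hqsc ((P.mulVec x) i) (-(lam * (P.mulVec Δ) i)) hvle).2
      have hrw : (P.mulVec x) i + -(lam * (P.mulVec Δ) i)
          = (P.mulVec x) i - lam * (P.mulVec Δ) i := by ring
      rw [hrw, mul_neg, neg_sq] at h
      linarith
    have hsum : ∑ i, f ((P.mulVec (x - lam • Δ)) i)
        ≤ (∑ i, f ((P.mulVec x) i))
          - lam * (∑ i, deriv f ((P.mulVec x) i) * (P.mulVec Δ) i)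
          + Real.exp 1 * lam^2 / 2
            * (∑ i, deriv (deriv f) ((P.mulVec x) i) * (P.mulVec Δ) i ^ 2) := by
      have h1 : ∑ i, f ((P.mulVec (x - lam • Δ)) i)
          = ∑ i, f ((P.mulVec x) i - lam * (P.mulVec Δ) i) :=
        Finset.sum_congr rfl (fun i _ => by rw [hPx' i])
      rw [h1]
      have h2 := Finset.sum_le_sum (fun i (_ : i ∈ Finset.univ) => hkey i)
      refine h2.trans_eq ?_
      rw [Finset.sum_add_distrib, Finset.sum_sub_distrib, Finset.mul_sum, Finset.mul_sum]
      congr 1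
      · congr 1
        exact Finset.sum_congr rfl fun i _ => by ring
      · exact Finset.sum_congr rfl fun i _ => by ring
    have hopt := hxsopt (x - lam • Δ) hx'
    have hQineq : lam * (∑ i, deriv f ((P.mulVec x) i) * (P.mulVec Δ) i)
        ≤ ν + Real.exp 1 * lam^2 / 2
          * (∑ i, deriv (deriv f) ((P.mulVec x) i) * (P.mulVec Δ) i ^ 2) := by
      linarith
    have he2 : Real.exp 2 = Real.exp 1 * Real.exp 1 := by
      rw [← Real.exp_add]; norm_num
    have hE : (0:ℝ) < Real.exp 1 := Real.exp_pos 1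
    set G := ∑ i, deriv f ((P.mulVec x) i) * (P.mulVec Δ) i with hG
    set Q := ∑ i, deriv (deriv f) ((P.mulVec x) i) * (P.mulVec Δ) i ^ 2 with hQ
    have hid : lam * ((2 * Real.exp 1)⁻¹) = Real.exp 1 * lam^2 / 2 := by
      rw [hlam, he2]
      field_simp
    have hid2 : lam * (Real.exp 2 * ν) = ν := by
      rw [hlam]
      field_simp
    have h3 : lam * (G - (2 * Real.exp 1)⁻¹ * Q) ≤ lam * (Real.exp 2 * ν) := by
      have e1 : lam * ((2 * Real.exp 1)⁻¹ * Q) = Real.exp 1 * lam^2 / 2 * Q := by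
        rw [← mul_assoc, hid]
      calc lam * (G - (2 * Real.exp 1)⁻¹ * Q)
          = lam * G - lam * ((2 * Real.exp 1)⁻¹ * Q) := by ring
        _ ≤ (ν + Real.exp 1 * lam^2 / 2 * Q) - Real.exp 1 * lam^2 / 2 * Q := by
            rw [e1]; linarith
        _ = ν := by ring
        _ = lam * (Real.exp 2 * ν) := hid2.symm
    have := le_of_mul_le_mul_left h3 hlam0
    simpa [resObj, ← hG, ← hQ] using this
  refine ⟨?_, Real.sSup_le hUB (by positivity)⟩
  -- Lower bound
  set t : ℝ := 1 / (4 * M * R) with htdef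
  have ht0 : 0 < t := by rw [htdef]; positivity
  have h4MR : (2:ℝ) ≤ 4 * M * R := by
    have : 4 * M * (1 / (2 * M)) = 2 := by field_simp; ring
    nlinarith [mul_le_mul_of_nonneg_left hR (by linarith : (0:ℝ) ≤ 4 * M)]
  have ht1 : t ≤ 1 := by
    rw [htdef, div_le_one (by linarith)]; linarith
  have ht2R : t * (2 * R) = 1 / (2 * M) := by
    rw [htdef]; field_simp; ring
  set Δ₀ : Fin n → ℝ := t • (x - xstar) with hΔ₀
  have hAΔ₀ : A.mulVec Δ₀ = 0 := by
    rw [hΔ₀, Matrix.mulVec_smul, Matrix.mulVec_sub, hxA, hxsA, sub_self, smul_zero]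
  have hPΔ₀ : ∀ i, (P.mulVec Δ₀) i = t * ((P.mulVec x) i - (P.mulVec xstar) i) := by
    intro i
    rw [hΔ₀, Matrix.mulVec_smul, Matrix.mulVec_sub]
    simp
  have hfeas : ‖P.mulVec Δ₀ - zShift m n P M R x‖ ≤ 1 / (2 * M) := by
    rw [pi_norm_le_iff_of_nonneg hc.le]
    intro i
    rw [Pi.sub_apply, Real.norm_eq_abs, hPΔ₀ i]
    have hs := abs_le.mp (hsb i)
    have hst := abs_le.mp (hstb i)
    have e1 : t * ((P.mulVec x) i - (P.mulVec xstar) i) ≤ t * ((P.mulVec x) i + R) :=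
      mul_le_mul_of_nonneg_left (by linarith [hst.1]) ht0.le
    have e2 : t * (-(2 * R)) ≤ t * ((P.mulVec x) i - (P.mulVec xstar) i) :=
      mul_le_mul_of_nonneg_left (by linarith [hs.1, hst.2]) ht0.le
    have e3 : t * ((P.mulVec x) i + R) ≤ 1 * ((P.mulVec x) i + R) :=
      mul_le_mul_of_nonneg_right ht1 (by linarith [hs.1])
    have e4 : t * ((P.mulVec x) i - (P.mulVec xstar) i) ≤ t * (2 * R) :=
      mul_le_mul_of_nonneg_left (by linarith [hs.2, hst.1]) ht0.le
    have e5 : t * ((P.mulVec x) i - R) ≤ t * ((P.mulVec x) i - (P.mulVec xstar) i) :=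
      mul_le_mul_of_nonneg_left (by linarith [hst.2]) ht0.le
    have e6 : 1 * ((P.mulVec x) i - R) ≤ t * ((P.mulVec x) i - R) := by
      have : (P.mulVec x) i - R ≤ 0 := by linarith [hs.2]
      nlinarith
    unfold zShift
    split_ifs with h1 h2 <;> rw [abs_le] <;> constructor <;>
      nlinarith [hs.1, hs.2, hc, ht2R, e1, e2, e3, e4, e5, e6]
  -- value of the residual at Δ₀
  have hcoef : (2 * Real.exp 1)⁻¹ = (Real.exp 1)⁻¹ / 2 := by
    rw [mul_inv]; ring
  have per : ∀ i, t * (f ((P.mulVec x) i) - f ((P.mulVec xstar) i))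
      ≤ deriv f ((P.mulVec x) i) * (t * ((P.mulVec x) i - (P.mulVec xstar) i))
        - (2 * Real.exp 1)⁻¹
          * (deriv (deriv f) ((P.mulVec x) i)
              * (t * ((P.mulVec x) i - (P.mulVec xstar) i)) ^ 2) := by
    intro i
    set si := (P.mulVec x) i with hsi
    set sti := (P.mulVec xstar) i with hsti
    set u := t * (si - sti) with hu
    have hs := abs_le.mp (hsb i)
    have hst := abs_le.mp (hstb i)
    have huabs : |u| ≤ 1 / M := by
      rw [hu, abs_mul, abs_of_pos ht0]
      have : |si - sti| ≤ 2 * R := by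
        rw [abs_le]; constructor <;> linarith [hs.1, hs.2, hst.1, hst.2]
      calc t * |si - sti| ≤ t * (2 * R) := mul_le_mul_of_nonneg_left this ht0.le
        _ = 1 / (2 * M) := ht2R
        _ ≤ 1 / M := hcM
    have hvle : |(-u)| ≤ 1 / M := by rwa [abs_neg]
    have hlow := (quad_bounds hM hf hqsc si (-u) hvle).1
    have hrw : si + -u = si - u := by ring
    rw [hrw, mul_neg, neg_sq] at hlow
    have hcomb : f (si - u) ≤ (1 - t) * f si + t * f sti := by
      have h := hconv.2 (Set.mem_univ si) (Set.mem_univ sti)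
        (by linarith : (0:ℝ) ≤ 1 - t) ht0.le (by ring)
      have harg : (1 - t) • si + t • sti = si - u := by
        rw [smul_eq_mul, smul_eq_mul, hu]; ring
      rw [harg] at h
      exact h
    rw [hcoef]
    linarith
  have hsumL : t * ((∑ i, f ((P.mulVec x) i)) - ∑ i, f ((P.mulVec xstar) i))
      ≤ resObj m n P f x Δ₀ := by
    unfold resObj
    have h1 : (∑ i, deriv f ((P.mulVec x) i) * (P.mulVec Δ₀) i)
        = ∑ i, deriv f ((P.mulVec x) i) * (t * ((P.mulVec x) i - (P.mulVec xstar) i)) :=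
      Finset.sum_congr rfl fun i _ => by rw [hPΔ₀ i]
    have h2 : (∑ i, deriv (deriv f) ((P.mulVec x) i) * (P.mulVec Δ₀) i ^ 2)
        = ∑ i, deriv (deriv f) ((P.mulVec x) i)
            * (t * ((P.mulVec x) i - (P.mulVec xstar) i)) ^ 2 :=
      Finset.sum_congr rfl fun i _ => by rw [hPΔ₀ i]
    rw [h1, h2]
    have h3 : t * ((∑ i, f ((P.mulVec x) i)) - ∑ i, f ((P.mulVec xstar) i))
        = ∑ i, t * (f ((P.mulVec x) i) - f ((P.mulVec xstar) i)) := by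
      rw [← Finset.mul_sum, Finset.sum_sub_distrib]
    have h4 : (∑ i, deriv f ((P.mulVec x) i) * (t * ((P.mulVec x) i - (P.mulVec xstar) i)))
        - (2 * Real.exp 1)⁻¹ * ∑ i, deriv (deriv f) ((P.mulVec x) i)
            * (t * ((P.mulVec x) i - (P.mulVec xstar) i)) ^ 2
        = ∑ i, (deriv f ((P.mulVec x) i) * (t * ((P.mulVec x) i - (P.mulVec xstar) i))
            - (2 * Real.exp 1)⁻¹ * (deriv (deriv f) ((P.mulVec x) i)
                * (t * ((P.mulVec x) i - (P.mulVec xstar) i)) ^ 2)) := by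
      rw [Finset.sum_sub_distrib, Finset.mul_sum]
    rw [h3, h4]
    exact Finset.sum_le_sum fun i _ => per i
  have hmem : resObj m n P f x Δ₀ ∈ S := ⟨Δ₀, hAΔ₀, hfeas, rfl⟩
  have hbdd : BddAbove S := ⟨Real.exp 2 * ν, fun v hv => hUB v hv⟩
  have hval : ν / (8 * M * R) = t * (ν / 2) := by
    rw [htdef, div_mul_div_comm, one_mul]
    congr 1
    ring
  calc ν / (8 * M * R) = t * (ν / 2) := hval
    _ < t * ((∑ i, f ((P.mulVec x) i)) - ∑ i, f ((P.mulVec xstar) i)) :=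
        (mul_lt_mul_iff_right₀ ht0).mpr hgap1
    _ ≤ resObj m n P f x Δ₀ := hsumL
    _ ≤ sSup S := le_csSup hbdd hmem
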